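/- Let F(x,e) = 1/((2x+2)e) - ((2x+1)/((2x+2)(e-2)))^e and let N be the unique zero of x ↦ F(x,8) on [1,∞). Then F(N,e) ≥ 0 for every integer e ≥ 8. -/

import Mathlib

noncomputable def F (x : ℝ) (e : ℕ) : ℝ :=
  1 / ((2*x+2)*e) - ((2*x+1) / ((2*x+2)*((e:ℝ)-2)))^e

lemma key_nat (e : ℕ) (he : 8 ≤ e) : e * 6^8 ≤ 8 * (e-2)^e := by
  have h1 : 6^8 ≤ (e-2)^8 := Nat.pow_le_pow_left (by omega) 8
  have h2 : e ≤ 8 * (e-2)^(e-8) := by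
    rcases Nat.eq_or_lt_of_le he with h | h
    · simp [← h]
    · have h3 : e - 2 ≤ (e-2)^(e-8) := Nat.le_self_pow (by omega) _
      omega
  calc e * 6^8 ≤ (8*(e-2)^(e-8)) * (e-2)^8 := Nat.mul_le_mul h2 h1
    _ = 8 * (e-2)^e := by
        rw [mul_assoc, ← pow_add]
        congr 2
        omega

theorem F_nonneg_of_zero (N : ℝ) (hN : 1 ≤ N) (hzero : F N 8 = 0) :
    ∀ e : ℕ, 8 ≤ e → F N e ≥ 0 := by
  intro e he
  have hs : (0:ℝ) < 2*N+1 := by linarith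
  have ht : (0:ℝ) < 2*N+2 := by linarith
  set s : ℝ := 2*N+1 with hsdef
  set t : ℝ := 2*N+2 with htdef
  have hst : s ≤ t := by rw [hsdef, htdef]; linarith
  have heR : (8:ℝ) ≤ (e:ℝ) := by exact_mod_cast he
  have hce : (e:ℝ) - 2 = ((e-2:ℕ):ℝ) := by
    have h2 : (2:ℕ) ≤ e := by omega
    push_cast [Nat.cast_sub h2]
    ring
  set c : ℝ := ((e-2:ℕ):ℝ) with hcdef
  have hc6 : (6:ℝ) ≤ c := by
    rw [← hce]; linarith
  have hcpos : (0:ℝ) < c := by linarith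
  have hepos : (0:ℝ) < (e:ℝ) := by linarith
  -- extract the zero equation
  unfold F at hzero
  norm_num at hzero
  -- hzero should give (s/(t*6))^8 = 1/(t*8) in some form
  have hz : (s/(t*6))^8 = 1/(t*8) := by
    have hq : (1:ℝ)/(t*8) = 1/8 * (2*N+2)⁻¹ := by rw [htdef]; field_simp
    rw [hsdef, htdef, hq]
    linarith [hzero]
  have hA : s^8 * (t*8) = 1 * (t*6)^8 := by
    rw [div_pow, div_eq_div_iff (by positivity) (by positivity)] at hz
    linarith [hz]
  -- main inequality
  have main : s^e * (t*(e:ℝ)) ≤ 1 * (t*c)^e := by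
    calc s^e * (t*(e:ℝ)) = (s^8 * s^(e-8)) * (t*(e:ℝ)) := by
          rw [← pow_add, Nat.add_sub_cancel' he]
      _ ≤ (s^8 * t^(e-8)) * (t*(e:ℝ)) := by
          gcongr
      _ = (s^8 * (t*8)) * (t^(e-8) * ((e:ℝ)/8)) := by ring
      _ = (1 * (t*6)^8) * (t^(e-8) * ((e:ℝ)/8)) := by rw [hA]
      _ = (t^8 * t^(e-8)) * (6^8 * ((e:ℝ)/8)) := by rw [one_mul, mul_pow]; ring
      _ = t^e * ((e:ℝ) * 6^8/8) := by rw [← pow_add, Nat.add_sub_cancel' he]; ring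
      _ ≤ t^e * c^e := by
          have hk := key_nat e he
          have hkR : (e:ℝ) * 6^8 ≤ 8 * c^e := by
            rw [hcdef]; exact_mod_cast hk
          have htpow : (0:ℝ) ≤ t^e := by positivity
          nlinarith
      _ = 1 * (t*c)^e := by rw [mul_pow]; ring
  -- goal
  unfold F
  rw [ge_iff_le, sub_nonneg, hce, ← hsdef, ← htdef, div_pow,
    div_le_div_iff₀ (by positivity) (by positivity)]
  exact main
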